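/- Let M ∈ ℝ^{n×n} be symmetric positive definite, A ∈ ℝ^{n×n}, let B ∈ ℝ^{m×n} have full row rank m, and let τ > 0. Consider the coefficient pair (ℰ, 𝒜) of the projection scheme, given in 4×4 block form (with block sizes n, m, n, m) by ℰ = [[(1/τ)M, 0, 0, 0], [0, 0, 0, 0], [−M, −(τ/2)Bᵀ, M, 0], [0, −I, 0, I]] and 𝒜 = [[0, (1/τ)M + A, 0, Bᵀ], [−(2/τ)B, −B M⁻¹ Bᵀ, 0, 0], [0, 0, 0, 0], [0, 0, 0, I]], both of size (2n+2m)×(2n+2m). Then there exist invertible matrices P, Q ∈ ℝ^{(2n+2m)×(2n+2m)} and a matrix J ∈ ℝ^{(2n+m)×(2n+m)} such that P ℰ Q = [[I_{2n+m}, 0], [0, 0]] and P 𝒜 Q = [[J, 0], [0, I_m]]. In other words, the difference-algebraic equation of the projection scheme has Kronecker index 1. -/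

import Mathlib

open Matrix

section Aux

variable {n m : ℕ}

private lemma matCancel {α β : Type*} [Fintype α] [DecidableEq α] {P Q : Matrix α α ℝ}
    (h : P * Q = 1) (C : Matrix α β ℝ) : P * (Q * C) = C := by
  rw [← Matrix.mul_assoc, h, Matrix.one_mul]

private lemma vecMul_ne {B : Matrix (Fin m) (Fin n) ℝ} (hB : B.rank = m)
    {x : Fin m → ℝ} (hx : x ≠ 0) : x ᵥ* B ≠ 0 := by
  have h1 : Bᵀ.rank = m := by rw [Matrix.rank_transpose]; exact hB
  have h2 := LinearMap.finrank_range_add_finrank_ker (Bᵀ.mulVecLin)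
  rw [show Module.finrank ℝ (LinearMap.range Bᵀ.mulVecLin) = Bᵀ.rank from rfl, h1] at h2
  simp [Module.finrank_fintype_fun_eq_card] at h2
  intro hcon
  apply hx
  have hmem : x ∈ LinearMap.ker B.vecMulLinear := by
    simpa [Matrix.vecMulLinear_apply] using hcon
  rw [h2] at hmem
  simpa using hmem

private lemma S_posDef {M : Matrix (Fin n) (Fin n) ℝ} {B : Matrix (Fin m) (Fin n) ℝ}
    (hM : M.PosDef) (hB : B.rank = m) : (B * M⁻¹ * Bᵀ).PosDef := by
  refine Matrix.PosDef.of_dotProduct_mulVec_pos ?_ ?_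
  · have h := hM.inv.isHermitian
    calc (B * M⁻¹ * Bᵀ)ᴴ = Bᵀᴴ * M⁻¹ᴴ * Bᴴ := by
          rw [Matrix.conjTranspose_mul, Matrix.conjTranspose_mul, Matrix.mul_assoc]
      _ = B * M⁻¹ * Bᵀ := by
          rw [h.eq]; congr 1 <;> simp [Matrix.conjTranspose, Matrix.transpose]
  · intro x hx
    have h := hM.inv.dotProduct_mulVec_pos (vecMul_ne hB hx)
    rw [Matrix.dotProduct_mulVec] at h
    show 0 < star x ⬝ᵥ (B * M⁻¹ * Bᵀ) *ᵥ x
    rw [star_trivial, Matrix.dotProduct_mulVec, ← Matrix.vecMul_vecMul,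
      ← Matrix.vecMul_vecMul, ← Matrix.dotProduct_mulVec, Matrix.mulVec_transpose]
    simpa using h

end Aux

section Equivs

private def sEquiv (n m : ℕ) : ((Fin n ⊕ Fin m) ⊕ (Fin n ⊕ Fin m)) ≃ ((Fin n ⊕ (Fin n ⊕ Fin m)) ⊕ Fin m) :=
  (Equiv.sumAssoc (Fin n) (Fin m) (Fin n ⊕ Fin m)).trans
    (((Equiv.refl (Fin n)).sumCongr (Equiv.sumComm (Fin m) (Fin n ⊕ Fin m))).trans
      (Equiv.sumAssoc (Fin n) (Fin n ⊕ Fin m) (Fin m)).symm)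

private def fEquiv (n m : ℕ) : (Fin n ⊕ (Fin n ⊕ Fin m)) ≃ Fin (2 * n + m) :=
  ((Equiv.refl (Fin n)).sumCongr finSumFinEquiv).trans
    (finSumFinEquiv.trans (finCongr (by omega)))

private def eEquiv (n m : ℕ) : ((Fin n ⊕ Fin m) ⊕ (Fin n ⊕ Fin m)) ≃ (Fin (2 * n + m) ⊕ Fin m) :=
  (sEquiv n m).trans ((fEquiv n m).sumCongr (Equiv.refl (Fin m)))

private lemma reindex_sumCongr {α₁ α₂ β₁ β₂ : Type*} (f : α₁ ≃ α₂) (g : β₁ ≃ β₂)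
    (H : Matrix α₁ α₁ ℝ) (U : Matrix α₁ β₁ ℝ) (L : Matrix β₁ α₁ ℝ) (V : Matrix β₁ β₁ ℝ) :
    reindex (f.sumCongr g) (f.sumCongr g) (fromBlocks H U L V) =
      fromBlocks (reindex f f H) (reindex f g U) (reindex g f L) (reindex g g V) := by
  ext (i | i) (j | j) <;> simp

private lemma eEquiv_conv (n m : ℕ)
    (G : Matrix ((Fin n ⊕ Fin m) ⊕ (Fin n ⊕ Fin m)) ((Fin n ⊕ Fin m) ⊕ (Fin n ⊕ Fin m)) ℝ)
    (H : Matrix (Fin n ⊕ (Fin n ⊕ Fin m)) (Fin n ⊕ (Fin n ⊕ Fin m)) ℝ)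
    (V : Matrix (Fin m) (Fin m) ℝ)
    (h : reindex (sEquiv n m) (sEquiv n m) G = fromBlocks H 0 0 V) :
    reindex (eEquiv n m) (eEquiv n m) G =
      fromBlocks (reindex (fEquiv n m) (fEquiv n m) H) 0 0 V := by
  have : reindex (eEquiv n m) (eEquiv n m) G =
      reindex ((fEquiv n m).sumCongr (Equiv.refl (Fin m))) ((fEquiv n m).sumCongr (Equiv.refl (Fin m)))
        (reindex (sEquiv n m) (sEquiv n m) G) := by
    simp [eEquiv, Matrix.reindex_apply, Matrix.submatrix_submatrix]
  rw [this, h, reindex_sumCongr]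
  simp

end Equivs

section Mats

variable {n m : ℕ} (M A : Matrix (Fin n) (Fin n) ℝ) (B : Matrix (Fin m) (Fin n) ℝ) (τ : ℝ)

private noncomputable def Smat : Matrix (Fin m) (Fin m) ℝ := B * M⁻¹ * Bᵀ

private noncomputable def Xmat : Matrix (Fin n) (Fin m) ℝ :=
  (3/2 : ℝ) • Bᵀ + (τ/2) • (A * (M⁻¹ * Bᵀ))

private noncomputable def T2mat : Matrix (Fin n) (Fin m) ℝ := (τ/2) • (M⁻¹ * Bᵀ)

private noncomputable def T4mat : Matrix (Fin m) (Fin n) ℝ := (-(2/τ)) • ((Smat M B)⁻¹ * B)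

private noncomputable def P0mat : Matrix ((Fin n ⊕ Fin m) ⊕ (Fin n ⊕ Fin m)) ((Fin n ⊕ Fin m) ⊕ (Fin n ⊕ Fin m)) ℝ :=
  fromBlocks
    (fromBlocks (τ • M⁻¹) (τ • (M⁻¹ * (Xmat M A B τ * (Smat M B)⁻¹))) 0 (-(Smat M B)⁻¹)) 0
    (fromBlocks 0 0 0 (Smat M B)⁻¹) (fromBlocks M⁻¹ 0 0 1)

private noncomputable def P0inv : Matrix ((Fin n ⊕ Fin m) ⊕ (Fin n ⊕ Fin m)) ((Fin n ⊕ Fin m) ⊕ (Fin n ⊕ Fin m)) ℝ :=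
  fromBlocks
    (fromBlocks ((1/τ) • M) (Xmat M A B τ) 0 (-(Smat M B))) 0
    (fromBlocks 0 0 0 1) (fromBlocks M 0 0 1)

private noncomputable def Q0mat : Matrix ((Fin n ⊕ Fin m) ⊕ (Fin n ⊕ Fin m)) ((Fin n ⊕ Fin m) ⊕ (Fin n ⊕ Fin m)) ℝ :=
  fromBlocks
    (fromBlocks 1 0 (T4mat M B τ) 1) 0
    (fromBlocks (1 + T2mat M B τ * T4mat M B τ) (T2mat M B τ) (T4mat M B τ) 1) 1

private noncomputable def Q0inv : Matrix ((Fin n ⊕ Fin m) ⊕ (Fin n ⊕ Fin m)) ((Fin n ⊕ Fin m) ⊕ (Fin n ⊕ Fin m)) ℝ :=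
  fromBlocks
    (fromBlocks 1 0 (-(T4mat M B τ)) 1) 0
    (fromBlocks (-1) (-(T2mat M B τ)) 0 (-1)) 1

end Mats

section Products

variable {n m : ℕ} {M A : Matrix (Fin n) (Fin n) ℝ} {B : Matrix (Fin m) (Fin n) ℝ} {τ : ℝ}

private lemma hQQ' : Q0mat M B τ * Q0inv M B τ = 1 := by
  rw [← Matrix.fromBlocks_one]
  simp [Q0mat, Q0inv, Matrix.fromBlocks_multiply, Matrix.add_mul, Matrix.mul_add,
    Matrix.fromBlocks_inj, Matrix.mul_assoc, Matrix.fromBlocks_add,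
    add_assoc, add_comm, add_left_comm]

private lemma hQ'Q : Q0inv M B τ * Q0mat M B τ = 1 := by
  rw [← Matrix.fromBlocks_one]
  simp [Q0mat, Q0inv, Matrix.fromBlocks_multiply, Matrix.add_mul, Matrix.mul_add,
    Matrix.fromBlocks_inj, Matrix.mul_assoc, Matrix.fromBlocks_add,
    add_assoc, add_comm, add_left_comm]

private lemma hPP' (h1 : M * M⁻¹ = 1) (h2 : M⁻¹ * M = 1)
    (h3 : Smat M B * (Smat M B)⁻¹ = 1) (h4 : (Smat M B)⁻¹ * Smat M B = 1)
    (hτ0 : τ ≠ 0) : P0mat M A B τ * P0inv M A B τ = 1 := by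
  rw [← Matrix.fromBlocks_one]
  simp [P0mat, P0inv, Matrix.fromBlocks_multiply, Matrix.add_mul, Matrix.mul_add,
    Matrix.fromBlocks_inj, Matrix.mul_assoc, Matrix.fromBlocks_add,
    Matrix.mul_smul, Matrix.smul_mul, smul_smul, h1, h2, h3, h4,
    matCancel h1, matCancel h2, matCancel h3, matCancel h4,
    mul_inv_cancel₀ hτ0, inv_mul_cancel₀ hτ0]

private lemma hP'P (h1 : M * M⁻¹ = 1) (h2 : M⁻¹ * M = 1)
    (h3 : Smat M B * (Smat M B)⁻¹ = 1) (h4 : (Smat M B)⁻¹ * Smat M B = 1)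
    (hτ0 : τ ≠ 0) : P0inv M A B τ * P0mat M A B τ = 1 := by
  rw [← Matrix.fromBlocks_one]
  simp [P0mat, P0inv, Matrix.fromBlocks_multiply, Matrix.add_mul, Matrix.mul_add,
    Matrix.fromBlocks_inj, Matrix.mul_assoc, Matrix.fromBlocks_add,
    Matrix.mul_smul, Matrix.smul_mul, smul_smul, h1, h2, h3, h4,
    matCancel h1, matCancel h2, matCancel h3, matCancel h4,
    mul_inv_cancel₀ hτ0, inv_mul_cancel₀ hτ0]

private lemma hEprod (h1 : M * M⁻¹ = 1) (h2 : M⁻¹ * M = 1)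
    (h3 : Smat M B * (Smat M B)⁻¹ = 1) (h4 : (Smat M B)⁻¹ * Smat M B = 1)
    (hτ0 : τ ≠ 0) :
    P0mat M A B τ * (fromBlocks
          (fromBlocks ((1 / τ) • M) 0 0 0) (0 : Matrix (Fin n ⊕ Fin m) (Fin n ⊕ Fin m) ℝ)
          (fromBlocks (-M) (-(τ / 2) • Bᵀ) 0 (-1)) (fromBlocks M 0 0 1)) * Q0mat M B τ =
      fromBlocks (fromBlocks 1 0 0 0) 0 0 1 := by
  simp [P0mat, Q0mat, Matrix.fromBlocks_multiply, Matrix.add_mul, Matrix.mul_add,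
    Matrix.fromBlocks_inj, Matrix.mul_assoc, Matrix.fromBlocks_add,
    Matrix.mul_smul, Matrix.smul_mul, smul_smul, h1, h2, h3, h4,
    matCancel h1, matCancel h2, matCancel h3, matCancel h4,
    mul_inv_cancel₀ hτ0, inv_mul_cancel₀ hτ0,
    T2mat, T4mat, Xmat, add_assoc, add_comm, add_left_comm]

private noncomputable def Kmat (M A : Matrix (Fin n) (Fin n) ℝ) (B : Matrix (Fin m) (Fin n) ℝ) (τ : ℝ) :
    Matrix (Fin n) (Fin n) ℝ :=
  (1/τ) • M + A + (-(2/τ)) • (Xmat M A B τ * ((Smat M B)⁻¹ * B))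

set_option maxHeartbeats 1000000 in
private lemma hAprod (h1 : M * M⁻¹ = 1) (h2 : M⁻¹ * M = 1)
    (h3 : Smat M B * (Smat M B)⁻¹ = 1) (h4 : (Smat M B)⁻¹ * Smat M B = 1)
    (hτ0 : τ ≠ 0) :
    P0mat M A B τ * (fromBlocks
          (fromBlocks 0 0 (-(2 / τ) • B) (-(B * M⁻¹ * Bᵀ)))
          (fromBlocks ((1 / τ) • M + A) Bᵀ 0 0)
          (0 : Matrix (Fin n ⊕ Fin m) (Fin n ⊕ Fin m) ℝ) (fromBlocks 0 0 0 1)) * Q0mat M B τ =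
      fromBlocks
        (fromBlocks (τ • (M⁻¹ * Kmat M A B τ)) 0 0 1)
        (fromBlocks (1 + τ • (M⁻¹ * A)) (τ • (M⁻¹ * Bᵀ)) 0 0)
        (fromBlocks 0 0 ((-(2/τ)) • ((Smat M B)⁻¹ * B)) 0)
        (fromBlocks 0 0 0 1) := by
  have sC : ∀ {β : Type} (C : Matrix (Fin m) β ℝ),
      (Smat M B)⁻¹ * (B * (M⁻¹ * (Bᵀ * C))) = C := by
    intro β C
    have h : B * (M⁻¹ * (Bᵀ * C)) = Smat M B * C := by simp [Smat, Matrix.mul_assoc]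
    rw [h, matCancel h4]
  have sO : (Smat M B)⁻¹ * (B * (M⁻¹ * Bᵀ)) = 1 := by
    rw [show B * (M⁻¹ * Bᵀ) = Smat M B by simp [Smat, Matrix.mul_assoc]]; exact h4
  simp [P0mat, Q0mat, Matrix.fromBlocks_multiply, Matrix.add_mul, Matrix.mul_add,
    Matrix.fromBlocks_inj, Matrix.mul_assoc, Matrix.fromBlocks_add,
    Matrix.mul_smul, Matrix.smul_mul, smul_smul, smul_add, h1, h2, h3, h4,
    matCancel h1, matCancel h2, matCancel h3, matCancel h4,
    mul_inv_cancel₀ hτ0, inv_mul_cancel₀ hτ0,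
    T2mat, T4mat, Xmat, Kmat, sC, sO, add_assoc, add_comm, add_left_comm]
  constructor <;> (match_scalars <;> field_simp <;> ring)

private noncomputable def J0mat (M A : Matrix (Fin n) (Fin n) ℝ) (B : Matrix (Fin m) (Fin n) ℝ) (τ : ℝ) :
    Matrix (Fin n ⊕ (Fin n ⊕ Fin m)) (Fin n ⊕ (Fin n ⊕ Fin m)) ℝ :=
  fromBlocks (τ • (M⁻¹ * Kmat M A B τ))
    (fromCols (1 + τ • (M⁻¹ * A)) (τ • (M⁻¹ * Bᵀ)))
    (fromRows 0 ((-(2/τ)) • ((Smat M B)⁻¹ * B)))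
    (fromBlocks 0 0 0 1)

private lemma hsE (n m : ℕ) :
    reindex (sEquiv n m) (sEquiv n m)
      (fromBlocks (fromBlocks 1 0 0 0) 0 0 1 :
        Matrix ((Fin n ⊕ Fin m) ⊕ (Fin n ⊕ Fin m)) ((Fin n ⊕ Fin m) ⊕ (Fin n ⊕ Fin m)) ℝ) =
      fromBlocks 1 0 0 (0 : Matrix (Fin m) (Fin m) ℝ) := by
  ext i j
  obtain ((i | (i | i)) | i) := i <;> obtain ((j | (j | j)) | j) := j <;>
    simp [sEquiv, Matrix.one_apply]

private lemma hsA :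
    reindex (sEquiv n m) (sEquiv n m)
      (fromBlocks
        (fromBlocks (τ • (M⁻¹ * Kmat M A B τ)) 0 0 1)
        (fromBlocks (1 + τ • (M⁻¹ * A)) (τ • (M⁻¹ * Bᵀ)) 0 0)
        (fromBlocks 0 0 ((-(2/τ)) • ((Smat M B)⁻¹ * B)) 0)
        (fromBlocks 0 0 0 1)) =
      fromBlocks (J0mat M A B τ) 0 0 (1 : Matrix (Fin m) (Fin m) ℝ) := by
  ext i j
  obtain ((i | (i | i)) | i) := i <;> obtain ((j | (j | j)) | j) := j <;>
    simp [sEquiv, J0mat, Matrix.one_apply, Matrix.fromCols, Matrix.fromRows_apply_inl, Matrix.fromRows_apply_inr]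

end Products

set_option maxHeartbeats 2000000 in
/-- The difference-algebraic equation of the projection scheme has Kronecker index 1: its
coefficient pair `(ℰ, 𝒜)`, given in 4×4 block form with block sizes `n, m, n, m` by
`ℰ = [[(1/τ)M, 0, 0, 0], [0, 0, 0, 0], [-M, -(τ/2)Bᵀ, M, 0], [0, -I, 0, I]]` and
`𝒜 = [[0, 0, (1/τ)M + A, Bᵀ], [-(2/τ)B, -B M⁻¹ Bᵀ, 0, 0], [0, 0, 0, 0], [0, 0, 0, I]]`
(the block `(1/τ)M + A` of size n×n is placed in the n-sized column block, which is the
only dimensionally consistent placement), is equivalent via invertible `P`, `Q` (after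
reindexing into blocks of sizes `2n + m` and `m`) to `([[I, 0], [0, 0]], [[J, 0], [0, I]])`. -/
theorem projection_scheme_kronecker_index_one (n m : ℕ)
    (M A : Matrix (Fin n) (Fin n) ℝ) (B : Matrix (Fin m) (Fin n) ℝ)
    (hM : M.PosDef) (hB : B.rank = m) (τ : ℝ) (hτ : 0 < τ) :
    ∃ (e : ((Fin n ⊕ Fin m) ⊕ (Fin n ⊕ Fin m)) ≃ (Fin (2 * n + m) ⊕ Fin m))
      (P Q : Matrix (Fin (2 * n + m) ⊕ Fin m) (Fin (2 * n + m) ⊕ Fin m) ℝ)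
      (J : Matrix (Fin (2 * n + m)) (Fin (2 * n + m)) ℝ),
      IsUnit P ∧ IsUnit Q ∧
      P * (reindex e e (fromBlocks
          (fromBlocks ((1 / τ) • M) 0 0 0) (0 : Matrix (Fin n ⊕ Fin m) (Fin n ⊕ Fin m) ℝ)
          (fromBlocks (-M) (-(τ / 2) • Bᵀ) 0 (-1)) (fromBlocks M 0 0 1))) * Q =
        fromBlocks 1 0 0 0 ∧
      P * (reindex e e (fromBlocks
          (fromBlocks 0 0 (-(2 / τ) • B) (-(B * M⁻¹ * Bᵀ)))
          (fromBlocks ((1 / τ) • M + A) Bᵀ 0 0)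
          (0 : Matrix (Fin n ⊕ Fin m) (Fin n ⊕ Fin m) ℝ) (fromBlocks 0 0 0 1))) * Q =
        fromBlocks J 0 0 1 := by
  classical
  have hτ0 : τ ≠ 0 := ne_of_gt hτ
  have hMdet : IsUnit M.det := (Matrix.isUnit_iff_isUnit_det M).mp hM.isUnit
  have h1 : M * M⁻¹ = 1 := Matrix.mul_nonsing_inv M hMdet
  have h2 : M⁻¹ * M = 1 := Matrix.nonsing_inv_mul M hMdet
  have hS : (Smat M B).PosDef := S_posDef hM hB
  have hSdet : IsUnit (Smat M B).det := (Matrix.isUnit_iff_isUnit_det _).mp hS.isUnit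
  have h3 : Smat M B * (Smat M B)⁻¹ = 1 := Matrix.mul_nonsing_inv _ hSdet
  have h4 : (Smat M B)⁻¹ * Smat M B = 1 := Matrix.nonsing_inv_mul _ hSdet
  have triple : ∀ (G : Matrix ((Fin n ⊕ Fin m) ⊕ (Fin n ⊕ Fin m))
      ((Fin n ⊕ Fin m) ⊕ (Fin n ⊕ Fin m)) ℝ),
      reindex (eEquiv n m) (eEquiv n m) (P0mat M A B τ) * reindex (eEquiv n m) (eEquiv n m) G *
        reindex (eEquiv n m) (eEquiv n m) (Q0mat M B τ) =
        reindex (eEquiv n m) (eEquiv n m) (P0mat M A B τ * G * Q0mat M B τ) := by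
    intro G
    simp [Matrix.reindex_apply, Matrix.submatrix_mul_equiv]
  refine ⟨eEquiv n m, reindex (eEquiv n m) (eEquiv n m) (P0mat M A B τ),
    reindex (eEquiv n m) (eEquiv n m) (Q0mat M B τ),
    reindex (fEquiv n m) (fEquiv n m) (J0mat M A B τ), ?_, ?_, ?_, ?_⟩
  · have : Invertible (P0mat M A B τ) :=
      invertibleOfRightInverse _ _ (hPP' h1 h2 h3 h4 hτ0)
    rw [Matrix.isUnit_iff_isUnit_det, Matrix.det_reindex_self,
      ← Matrix.isUnit_iff_isUnit_det]
    exact isUnit_of_invertible _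
  · have : Invertible (Q0mat M B τ) :=
      invertibleOfRightInverse _ _ hQQ'
    rw [Matrix.isUnit_iff_isUnit_det, Matrix.det_reindex_self,
      ← Matrix.isUnit_iff_isUnit_det]
    exact isUnit_of_invertible _
  · rw [triple, hEprod h1 h2 h3 h4 hτ0, eEquiv_conv n m _ _ _ (hsE n m)]
    simp [Matrix.reindex_apply, Matrix.submatrix_one_equiv]
  · rw [triple, hAprod h1 h2 h3 h4 hτ0, eEquiv_conv n m _ _ _ hsA]
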